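/- Let E be a finite-valued nonnegative random variable with mean P̄_E, and let I(·,∞) denote the average-power privacy-power function. Then E_E[I(E, E)] ≥ I(P̄_E, ∞). That is, the minimum leakage with zero battery and state known at the utility provider is at least the minimum leakage with an infinite battery. -/

import Mathlib

open Finset Real

noncomputable section

/-- `w` is a probability mass function on the finite sample space `Ω`. -/
def IsPMF {Ω : Type*} [Fintype Ω] (w : Ω → ℝ) : Prop :=
  (∀ ω, 0 ≤ w ω) ∧ ∑ ω, w ω = 1

/-- Distribution (pmf) of the random variable `X` under the weight `w`. -/
def rvDist {Ω A : Type*} [Fintype Ω] [DecidableEq A] (w : Ω → ℝ) (X : Ω → A) (a : A) : ℝ :=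
  ∑ ω, if X ω = a then w ω else 0

/-- Shannon entropy (in bits) of `X` under `w`. -/
def Hent {Ω A : Type*} [Fintype Ω] [Fintype A] [DecidableEq A] (w : Ω → ℝ) (X : Ω → A) : ℝ :=
  -∑ a, rvDist w X a * Real.logb 2 (rvDist w X a)

/-- Conditional entropy `H(X | Z)` (in bits). -/
def Hcond {Ω A C : Type*} [Fintype Ω] [Fintype A] [Fintype C] [DecidableEq A] [DecidableEq C]
    (w : Ω → ℝ) (X : Ω → A) (Z : Ω → C) : ℝ :=
  Hent w (fun ω => (X ω, Z ω)) - Hent w Z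

/-- Mutual information `I(X;Y)` (in bits). -/
def MI {Ω A B : Type*} [Fintype Ω] [Fintype A] [Fintype B] [DecidableEq A] [DecidableEq B]
    (w : Ω → ℝ) (X : Ω → A) (Y : Ω → B) : ℝ :=
  Hent w X + Hent w Y - Hent w (fun ω => (X ω, Y ω))

/-- Conditional mutual information `I(X;Y|E)` (in bits). -/
def CMI {Ω A B C : Type*} [Fintype Ω] [Fintype A] [Fintype B] [Fintype C]
    [DecidableEq A] [DecidableEq B] [DecidableEq C]
    (w : Ω → ℝ) (X : Ω → A) (Y : Ω → B) (E : Ω → C) : ℝ :=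
  Hent w (fun ω => (X ω, E ω)) + Hent w (fun ω => (Y ω, E ω))
    - Hent w (fun ω => (X ω, Y ω, E ω)) - Hent w E

/-- `X` and `E` are independent under `w`. -/
def IndepRV {Ω A C : Type*} [Fintype Ω] [DecidableEq A] [DecidableEq C]
    (w : Ω → ℝ) (X : Ω → A) (E : Ω → C) : Prop :=
  ∀ a c, rvDist w (fun ω => (X ω, E ω)) (a, c) = rvDist w X a * rvDist w E c

/-- Expected energy drawn from the alternative source, `E[X - Y]`, under channel `K`. -/
def avgDraw {ι : Type*} [Fintype ι] (v p : ι → ℝ) (K : ι → ι → ℝ) : ℝ :=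
  ∑ x, ∑ y, p x * K x y * (v x - v y)

/-- `K` is a channel: nonnegative, rows summing to one, and feasible: `Y ≤ X` pointwise. -/
def IsChannel {ι : Type*} [Fintype ι] (v : ι → ℝ) (K : ι → ι → ℝ) : Prop :=
  (∀ x y, 0 ≤ K x y) ∧ (∀ x, ∑ y, K x y = 1) ∧ (∀ x y, 0 < K x y → 0 ≤ v x - v y)

/-- Mutual information `I(X;Y)` induced by the input pmf `p` and the channel `K`. -/
def chanMI {ι : Type*} [Fintype ι] [DecidableEq ι] (p : ι → ℝ) (K : ι → ι → ℝ) : ℝ :=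
  MI (fun xy : ι × ι => p xy.1 * K xy.1 xy.2) Prod.fst Prod.snd

/-- Privacy-power function with an average power constraint only: `I(P̄, ∞)`. -/
def ppfAvg {ι : Type*} [Fintype ι] [DecidableEq ι] (v p : ι → ℝ) (Pbar : ℝ) : ℝ :=
  sInf {r | ∃ K : ι → ι → ℝ, IsChannel v K ∧
    0 ≤ avgDraw v p K ∧ avgDraw v p K ≤ Pbar ∧ r = chanMI p K}

/-- Privacy-power function with average and peak power constraints: `I(P̄, P̂)`. -/
def ppfBoth {ι : Type*} [Fintype ι] [DecidableEq ι] (v p : ι → ℝ) (Pbar Phat : ℝ) : ℝ :=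
  sInf {r | ∃ K : ι → ι → ℝ, IsChannel v K ∧
    (∀ x y, 0 < K x y → v x - v y ≤ Phat) ∧
    0 ≤ avgDraw v p K ∧ avgDraw v p K ≤ Pbar ∧ r = chanMI p K}


namespace PPFAux

/-- `gl a b = a * log (a/b)`, the natural-log KL integrand. -/
def gl (a b : ℝ) : ℝ := a * Real.log (a / b)

lemma gl_zero (b : ℝ) : gl 0 b = 0 := by simp [gl]

lemma gl_smul {c : ℝ} (hc : 0 ≤ c) (u v : ℝ) : gl (c * u) (c * v) = c * gl u v := by
  rcases eq_or_lt_of_le hc with h | h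
  · simp [gl, ← h]
  · rw [gl, gl, mul_div_mul_left u v (ne_of_gt h), mul_assoc]

/-- Log-sum inequality (natural log). -/
lemma log_sum {α : Type*} (s : Finset α) (a b : α → ℝ)
    (ha : ∀ i ∈ s, 0 ≤ a i) (hb : ∀ i ∈ s, 0 ≤ b i)
    (hab : ∀ i ∈ s, b i = 0 → a i = 0) :
    gl (∑ i ∈ s, a i) (∑ i ∈ s, b i) ≤ ∑ i ∈ s, gl (a i) (b i) := by
  set A := ∑ i ∈ s, a i with hA
  set B := ∑ i ∈ s, b i with hB
  by_cases hA0 : A = 0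
  · have hz : ∀ i ∈ s, a i = 0 := by
      have h2 := hA0
      rw [hA] at h2
      exact (Finset.sum_eq_zero_iff_of_nonneg ha).1 h2
    rw [hA0, gl_zero]
    apply Finset.sum_nonneg
    intro i hi
    rw [hz i hi, gl_zero]
  · have hApos : 0 < A := lt_of_le_of_ne (Finset.sum_nonneg ha) (Ne.symm hA0)
    have hB0 : B ≠ 0 := by
      intro h
      apply hA0
      have hbz : ∀ i ∈ s, b i = 0 := (Finset.sum_eq_zero_iff_of_nonneg hb).1 h
      exact Finset.sum_eq_zero fun i hi => hab i hi (hbz i hi)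
    have hBpos : 0 < B := lt_of_le_of_ne (Finset.sum_nonneg hb) (Ne.symm hB0)
    -- pointwise bound
    have key : ∀ i ∈ s, a i * Real.log (A / B) + a i - (A / B) * b i ≤ gl (a i) (b i) := by
      intro i hi
      by_cases hai : a i = 0
      · rw [hai, gl_zero]
        have : 0 ≤ (A / B) * b i := mul_nonneg (le_of_lt (div_pos hApos hBpos)) (hb i hi)
        linarith
      · have hapos : 0 < a i := lt_of_le_of_ne (ha i hi) (Ne.symm hai)
        have hbpos : 0 < b i := by
          rcases lt_or_eq_of_le (hb i hi) with h | h
          · exact h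
          · exact absurd (hab i hi h.symm) hai
        set t : ℝ := (a i * B) / (b i * A) with ht
        have htpos : 0 < t := div_pos (mul_pos hapos hBpos) (mul_pos hbpos hApos)
        have hlog : 1 - t⁻¹ ≤ Real.log t := Real.one_sub_inv_le_log_of_pos htpos
        have hlogt : Real.log t = Real.log (a i / b i) - Real.log (A / B) := by
          rw [ht]
          rw [Real.log_div (ne_of_gt (mul_pos hapos hBpos)) (ne_of_gt (mul_pos hbpos hApos)),
            Real.log_mul (ne_of_gt hapos) (ne_of_gt hBpos),
            Real.log_mul (ne_of_gt hbpos) (ne_of_gt hApos),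
            Real.log_div (ne_of_gt hapos) (ne_of_gt hbpos),
            Real.log_div (ne_of_gt hApos) (ne_of_gt hBpos)]
          ring
        have hinv : t⁻¹ = (b i * A) / (a i * B) := by
          rw [ht, inv_div]
        have hmul : a i * (1 - t⁻¹) ≤ a i * Real.log t :=
          mul_le_mul_of_nonneg_left hlog (le_of_lt hapos)
        have hexp : a i * (1 - t⁻¹) = a i - (A / B) * b i := by
          rw [hinv]
          field_simp
        rw [hexp, hlogt] at hmul
        rw [gl]
        linarith [hmul]
    calc gl A B = ∑ i ∈ s, (a i * Real.log (A / B) + a i - (A / B) * b i) := by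
          rw [Finset.sum_sub_distrib, Finset.sum_add_distrib, ← Finset.sum_mul, ← Finset.mul_sum,
            ← hA, ← hB, gl]
          field_simp
          ring
      _ ≤ ∑ i ∈ s, gl (a i) (b i) := Finset.sum_le_sum key

end PPFAux

namespace PPFAux

/-- `glb a b = a * logb 2 (a/b)`. -/
def glb (a b : ℝ) : ℝ := a * Real.logb 2 (a / b)

lemma glb_eq (a b : ℝ) : glb a b = gl a b / Real.log 2 := by
  rw [glb, gl, Real.logb, mul_div_assoc]

lemma glb_zero (b : ℝ) : glb 0 b = 0 := by simp [glb]

lemma glb_smul {c : ℝ} (hc : 0 ≤ c) (u v : ℝ) : glb (c * u) (c * v) = c * glb u v := by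
  rw [glb_eq, glb_eq, gl_smul hc, mul_div_assoc]

lemma log_sum_b {α : Type*} (s : Finset α) (a b : α → ℝ)
    (ha : ∀ i ∈ s, 0 ≤ a i) (hb : ∀ i ∈ s, 0 ≤ b i)
    (hab : ∀ i ∈ s, b i = 0 → a i = 0) :
    glb (∑ i ∈ s, a i) (∑ i ∈ s, b i) ≤ ∑ i ∈ s, glb (a i) (b i) := by
  have h2 : (0:ℝ) < Real.log 2 := Real.log_pos one_lt_two
  rw [glb_eq]
  have : ∑ i ∈ s, glb (a i) (b i) = (∑ i ∈ s, gl (a i) (b i)) / Real.log 2 := by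
    rw [Finset.sum_div]
    exact Finset.sum_congr rfl fun i _ => glb_eq _ _
  rw [this]
  exact (div_le_div_iff_of_pos_right h2).2 (log_sum s a b ha hb hab)

variable {ι : Type*} [Fintype ι] [DecidableEq ι]

/-- Output distribution of channel `K` with input `p`. -/
def qd (p : ι → ℝ) (K : ι → ι → ℝ) (y : ι) : ℝ := ∑ x, p x * K x y

lemma rvDist_fst (p : ι → ℝ) (K : ι → ι → ℝ) (hK1 : ∀ x, ∑ y, K x y = 1) (a : ι) :
    rvDist (fun xy : ι × ι => p xy.1 * K xy.1 xy.2) Prod.fst a = p a := by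
  rw [rvDist, Fintype.sum_prod_type]
  have h : ∀ x : ι, (∑ y, if (x, y).1 = a then p (x,y).1 * K (x,y).1 (x,y).2 else 0)
      = if x = a then p x else 0 := by
    intro x
    by_cases hx : x = a
    · subst hx
      simp only [if_pos rfl, ite_true, ← Finset.mul_sum, hK1 x, mul_one]
    · simp [hx]
  rw [Finset.sum_congr rfl fun x _ => h x]
  simp

lemma rvDist_snd (p : ι → ℝ) (K : ι → ι → ℝ) (b : ι) :
    rvDist (fun xy : ι × ι => p xy.1 * K xy.1 xy.2) Prod.snd b = qd p K b := by
  rw [rvDist, Fintype.sum_prod_type, qd]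
  apply Finset.sum_congr rfl
  intro x _
  simp

lemma rvDist_pair (p : ι → ℝ) (K : ι → ι → ℝ) (ab : ι × ι) :
    rvDist (fun xy : ι × ι => p xy.1 * K xy.1 xy.2)
      (fun ω : ι × ι => (Prod.fst ω, Prod.snd ω)) ab = p ab.1 * K ab.1 ab.2 := by
  rw [rvDist]
  simp [Prod.mk.eta, Finset.sum_ite_eq, Finset.sum_ite_eq']

lemma chanMI_eq (p : ι → ℝ) (K : ι → ι → ℝ) (hp : IsPMF p)
    (hK0 : ∀ x y, 0 ≤ K x y) (hK1 : ∀ x, ∑ y, K x y = 1) :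
    chanMI p K = ∑ x, ∑ y, glb (p x * K x y) (p x * qd p K y) := by
  have hqd0 : ∀ y, 0 ≤ qd p K y := fun y =>
    Finset.sum_nonneg fun x _ => mul_nonneg (hp.1 x) (hK0 x y)
  have hH1 : Hent (fun xy : ι × ι => p xy.1 * K xy.1 xy.2) Prod.fst
      = -∑ a, p a * Real.logb 2 (p a) := by
    rw [Hent]
    congr 1
    exact Finset.sum_congr rfl fun a _ => by rw [rvDist_fst p K hK1]
  have hH2 : Hent (fun xy : ι × ι => p xy.1 * K xy.1 xy.2) Prod.snd
      = -∑ b, qd p K b * Real.logb 2 (qd p K b) := by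
    rw [Hent]
    congr 1
    exact Finset.sum_congr rfl fun b _ => by rw [rvDist_snd p K]
  have hH3 : Hent (fun xy : ι × ι => p xy.1 * K xy.1 xy.2)
      (fun ω : ι × ι => (Prod.fst ω, Prod.snd ω))
      = -∑ x, ∑ y, (p x * K x y) * Real.logb 2 (p x * K x y) := by
    rw [Hent]
    congr 1
    rw [Fintype.sum_prod_type]
    exact Finset.sum_congr rfl fun x _ => Finset.sum_congr rfl fun y _ => by
      rw [rvDist_pair p K (x, y)]
  have e1 : ∑ a, p a * Real.logb 2 (p a)
      = ∑ x, ∑ y, (p x * K x y) * Real.logb 2 (p x) := by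
    apply Finset.sum_congr rfl
    intro x _
    rw [← Finset.sum_mul, ← Finset.mul_sum, hK1 x, mul_one]
  have e2 : ∑ b, qd p K b * Real.logb 2 (qd p K b)
      = ∑ x, ∑ y, (p x * K x y) * Real.logb 2 (qd p K y) := by
    rw [Finset.sum_comm]
    apply Finset.sum_congr rfl
    intro y _
    rw [← Finset.sum_mul, qd]
  have key : ∀ x y, (p x * K x y) * Real.logb 2 (p x * K x y)
      - (p x * K x y) * Real.logb 2 (p x) - (p x * K x y) * Real.logb 2 (qd p K y)
      = glb (p x * K x y) (p x * qd p K y) := by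
    intro x y
    by_cases hw : p x * K x y = 0
    · rw [hw, glb_zero]
      ring
    · have hpx : p x ≠ 0 := fun h => hw (by rw [h, zero_mul])
      have hqy : 0 < qd p K y := by
        rcases lt_or_eq_of_le (hqd0 y) with h | h
        · exact h
        · exfalso
          apply hw
          have := (Finset.sum_eq_zero_iff_of_nonneg
            (fun x _ => mul_nonneg (hp.1 x) (hK0 x y))).1 h.symm
          exact this x (Finset.mem_univ x)
      have hpq : p x * qd p K y ≠ 0 := mul_ne_zero hpx (ne_of_gt hqy)
      rw [glb, Real.logb_div hw hpq, Real.logb_mul hpx (ne_of_gt hqy)]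
      ring
  rw [chanMI, MI, hH1, hH2, hH3, e1, e2]
  rw [show ∀ A B C : ℝ, -A + -B - -C = C - A - B from fun A B C => by ring]
  rw [← Finset.sum_sub_distrib, ← Finset.sum_sub_distrib]
  apply Finset.sum_congr rfl
  intro x _
  rw [← Finset.sum_sub_distrib, ← Finset.sum_sub_distrib]
  exact Finset.sum_congr rfl fun y _ => key x y


lemma chanMI_nonneg (p : ι → ℝ) (K : ι → ι → ℝ) (hp : IsPMF p)
    (hK0 : ∀ x y, 0 ≤ K x y) (hK1 : ∀ x, ∑ y, K x y = 1) :
    0 ≤ chanMI p K := by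
  rw [chanMI_eq p K hp hK0 hK1]
  have hsum : (∑ x, ∑ y, glb (p x * K x y) (p x * qd p K y))
      = ∑ ab : ι × ι, glb (p ab.1 * K ab.1 ab.2) (p ab.1 * qd p K ab.2) := by
    rw [Fintype.sum_prod_type]
  rw [hsum]
  have hA : ∑ ab : ι × ι, p ab.1 * K ab.1 ab.2 = 1 := by
    rw [Fintype.sum_prod_type]
    calc ∑ x, ∑ y, p x * K x y = ∑ x, p x := by
          apply Finset.sum_congr rfl
          intro x _
          rw [← Finset.mul_sum, hK1 x, mul_one]
      _ = 1 := hp.2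
  have hqd1 : ∑ y, qd p K y = 1 := by
    rw [show ∑ y, qd p K y = ∑ y, ∑ x, p x * K x y from rfl, Finset.sum_comm]
    calc ∑ x, ∑ y, p x * K x y = ∑ x, p x := by
          apply Finset.sum_congr rfl
          intro x _
          rw [← Finset.mul_sum, hK1 x, mul_one]
      _ = 1 := hp.2
  have hB : ∑ ab : ι × ι, p ab.1 * qd p K ab.2 = 1 := by
    rw [Fintype.sum_prod_type]
    calc ∑ x, ∑ y, p x * qd p K y = ∑ x, p x * 1 := by
          apply Finset.sum_congr rfl
          intro x _
          rw [← Finset.mul_sum, hqd1]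
      _ = 1 := by simp [hp.2]
  have := log_sum_b Finset.univ (fun ab : ι × ι => p ab.1 * K ab.1 ab.2)
    (fun ab : ι × ι => p ab.1 * qd p K ab.2)
    (fun ab _ => mul_nonneg (hp.1 _) (hK0 _ _))
    (fun ab _ => mul_nonneg (hp.1 _) (Finset.sum_nonneg fun x _ =>
      mul_nonneg (hp.1 x) (hK0 x _)))
    (fun ab _ hb => by
      rcases mul_eq_zero.1 hb with h | h
      · show p ab.1 * K ab.1 ab.2 = 0
        rw [h, zero_mul]
      · have := (Finset.sum_eq_zero_iff_of_nonneg
          (fun x _ => mul_nonneg (hp.1 x) (hK0 x ab.2))).1 h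
        exact this ab.1 (Finset.mem_univ _))
  rw [hA, hB] at this
  simpa [glb] using this

lemma chanMI_mix {κ : Type*} [Fintype κ] (p : ι → ℝ) (hp : IsPMF p)
    (pE : κ → ℝ) (hpE : IsPMF pE) (Ks : κ → ι → ι → ℝ)
    (hKs0 : ∀ k x y, 0 ≤ Ks k x y) (hKs1 : ∀ k x, ∑ y, Ks k x y = 1) :
    chanMI p (fun x y => ∑ k, pE k * Ks k x y) ≤ ∑ k, pE k * chanMI p (Ks k) := by
  set Km : ι → ι → ℝ := fun x y => ∑ k, pE k * Ks k x y with hKm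
  have hKm0 : ∀ x y, 0 ≤ Km x y := fun x y =>
    Finset.sum_nonneg fun k _ => mul_nonneg (hpE.1 k) (hKs0 k x y)
  have hKm1 : ∀ x, ∑ y, Km x y = 1 := by
    intro x
    rw [show ∑ y, Km x y = ∑ y, ∑ k, pE k * Ks k x y from rfl, Finset.sum_comm]
    calc ∑ k, ∑ y, pE k * Ks k x y = ∑ k, pE k := by
          apply Finset.sum_congr rfl
          intro k _
          rw [← Finset.mul_sum, hKs1 k x, mul_one]
      _ = 1 := hpE.2
  have hqm : ∀ y, qd p Km y = ∑ k, pE k * qd p (Ks k) y := by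
    intro y
    rw [qd]
    have hx : ∀ x, p x * Km x y = ∑ k, pE k * (p x * Ks k x y) := by
      intro x
      rw [hKm]
      simp only [Finset.mul_sum]
      exact Finset.sum_congr rfl fun k _ => by ring
    rw [Finset.sum_congr rfl fun x _ => hx x, Finset.sum_comm]
    apply Finset.sum_congr rfl
    intro k _
    rw [qd, Finset.mul_sum]
  rw [chanMI_eq p Km hp hKm0 hKm1]
  have hax : ∀ x y, p x * Km x y = ∑ k, pE k * (p x * Ks k x y) := by
    intro x y
    rw [hKm]
    simp only [Finset.mul_sum]
    exact Finset.sum_congr rfl fun k _ => by ring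
  have hbx : ∀ x y, p x * qd p Km y = ∑ k, pE k * (p x * qd p (Ks k) y) := by
    intro x y
    rw [hqm y]
    simp only [Finset.mul_sum]
    exact Finset.sum_congr rfl fun k _ => by ring
  have hpt : ∀ x y, glb (p x * Km x y) (p x * qd p Km y)
      ≤ ∑ k, pE k * glb (p x * Ks k x y) (p x * qd p (Ks k) y) := by
    intro x y
    rw [hax x y, hbx x y]
    refine le_trans (log_sum_b Finset.univ (fun k => pE k * (p x * Ks k x y))
      (fun k => pE k * (p x * qd p (Ks k) y)) ?_ ?_ ?_) ?_
    · intro k _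
      exact mul_nonneg (hpE.1 k) (mul_nonneg (hp.1 x) (hKs0 k x y))
    · intro k _
      exact mul_nonneg (hpE.1 k) (mul_nonneg (hp.1 x)
        (Finset.sum_nonneg fun x' _ => mul_nonneg (hp.1 x') (hKs0 k x' y)))
    · intro k _ hb
      have hb' : pE k * (p x * qd p (Ks k) y) = 0 := hb
      show pE k * (p x * Ks k x y) = 0
      rcases mul_eq_zero.1 hb' with h | h
      · rw [h, zero_mul]
      · rcases mul_eq_zero.1 h with h' | h'
        · rw [h', zero_mul, mul_zero]
        · have hz : p x * Ks k x y = 0 := (Finset.sum_eq_zero_iff_of_nonneg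
            (fun x' _ => mul_nonneg (hp.1 x') (hKs0 k x' y))).1 h' x (Finset.mem_univ x)
          rw [hz, mul_zero]
    · apply le_of_eq
      exact Finset.sum_congr rfl fun k _ => glb_smul (hpE.1 k) _ _
  calc ∑ x, ∑ y, glb (p x * Km x y) (p x * qd p Km y)
      ≤ ∑ x, ∑ y, ∑ k, pE k * glb (p x * Ks k x y) (p x * qd p (Ks k) y) :=
        Finset.sum_le_sum fun x _ => Finset.sum_le_sum fun y _ => hpt x y
    _ = ∑ k, pE k * chanMI p (Ks k) := by
        rw [Finset.sum_congr rfl fun x (_ : x ∈ Finset.univ) => Finset.sum_comm, Finset.sum_comm]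
        apply Finset.sum_congr rfl
        intro k _
        rw [chanMI_eq p (Ks k) hp (hKs0 k) (hKs1 k), Finset.mul_sum]
        apply Finset.sum_congr rfl
        intro x _
        rw [Finset.mul_sum]

end PPFAux

open PPFAux

/-- for a finite-valued nonnegative harvested energy `E` (pmf `pE`, values `vE`,
mean `P̄_E = ∑ k, pE k * vE k`), the zero-battery, state-known-at-UP leakage `E_E[I(E,E)]`
is at least the infinite-battery leakage `I(P̄_E, ∞)`. -/
theorem expected_ppf_ge_ppf_of_mean {ι κ : Type*} [Fintype ι] [DecidableEq ι] [Fintype κ]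
    (v p : ι → ℝ) (hp : IsPMF p) (hv : ∀ i, 0 ≤ v i)
    (vE pE : κ → ℝ) (hpE : IsPMF pE) (hvE : ∀ k, 0 ≤ vE k) :
    ppfAvg v p (∑ k, pE k * vE k) ≤ ∑ k, pE k * ppfBoth v p (vE k) (vE k) := by
  classical
  set Pbar := ∑ k, pE k * vE k with hPbar
  -- the identity channel
  set Kid : ι → ι → ℝ := fun x y => if y = x then 1 else 0 with hKidDef
  have hKid : IsChannel v Kid := by
    refine ⟨fun x y => ?_, fun x => by simp [hKidDef], fun x y hpos => ?_⟩
    · rw [hKidDef]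
      dsimp only
      split <;> norm_num
    · by_cases h : y = x
      · subst h
        simp
      · rw [hKidDef] at hpos
        simp [h] at hpos
  have hKidDraw : avgDraw v p Kid = 0 := by
    rw [avgDraw]
    apply Finset.sum_eq_zero
    intro x _
    apply Finset.sum_eq_zero
    intro y _
    by_cases h : y = x
    · subst h
      simp
    · simp [hKidDef, h]
  have hBothNE : ∀ k, Set.Nonempty {r | ∃ K : ι → ι → ℝ, IsChannel v K ∧
      (∀ x y, 0 < K x y → v x - v y ≤ vE k) ∧
      0 ≤ avgDraw v p K ∧ avgDraw v p K ≤ vE k ∧ r = chanMI p K} := by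
    intro k
    refine ⟨chanMI p Kid, Kid, hKid, ?_, ?_, ?_, rfl⟩
    · intro x y hpos
      by_cases h : y = x
      · subst h
        simpa using hvE k
      · rw [hKidDef] at hpos
        simp [h] at hpos
    · rw [hKidDraw]
    · rw [hKidDraw]
      exact hvE k
  have hAvgBdd : BddBelow {r | ∃ K : ι → ι → ℝ, IsChannel v K ∧
      0 ≤ avgDraw v p K ∧ avgDraw v p K ≤ Pbar ∧ r = chanMI p K} := by
    refine ⟨0, fun r hr => ?_⟩
    obtain ⟨K, hK, _, _, hre⟩ := hr
    rw [hre]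
    exact chanMI_nonneg p K hp hK.1 hK.2.1
  apply le_of_forall_pos_le_add
  intro ε hε
  have hchoose : ∀ k, ∃ K : ι → ι → ℝ, (IsChannel v K ∧
      0 ≤ avgDraw v p K ∧ avgDraw v p K ≤ vE k) ∧
      chanMI p K < ppfBoth v p (vE k) (vE k) + ε := by
    intro k
    obtain ⟨r, hr, hrlt⟩ := Real.lt_sInf_add_pos (hBothNE k) hε
    obtain ⟨K, hK1, _, hK3, hK4, hre⟩ := hr
    exact ⟨K, ⟨hK1, hK3, hK4⟩, by rw [← hre]; exact hrlt⟩
  choose Ks hKsmem hKslt using hchoose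
  have hKs0 : ∀ k x y, 0 ≤ Ks k x y := fun k => (hKsmem k).1.1
  have hKs1 : ∀ k x, ∑ y, Ks k x y = 1 := fun k => (hKsmem k).1.2.1
  set Km : ι → ι → ℝ := fun x y => ∑ k, pE k * Ks k x y with hKmDef
  have hKm0 : ∀ x y, 0 ≤ Km x y := fun x y =>
    Finset.sum_nonneg fun k _ => mul_nonneg (hpE.1 k) (hKs0 k x y)
  have hKm1 : ∀ x, ∑ y, Km x y = 1 := by
    intro x
    rw [show ∑ y, Km x y = ∑ y, ∑ k, pE k * Ks k x y from rfl, Finset.sum_comm]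
    calc ∑ k, ∑ y, pE k * Ks k x y = ∑ k, pE k := by
          apply Finset.sum_congr rfl
          intro k _
          rw [← Finset.mul_sum, hKs1 k x, mul_one]
      _ = 1 := hpE.2
  have hKmChan : IsChannel v Km := by
    refine ⟨hKm0, hKm1, fun x y hpos => ?_⟩
    have : ∃ k ∈ Finset.univ, 0 < pE k * Ks k x y := by
      by_contra h
      push_neg at h
      have hz : ∑ k, pE k * Ks k x y = 0 := Finset.sum_eq_zero fun k hk =>
        le_antisymm (h k hk) (mul_nonneg (hpE.1 k) (hKs0 k x y))
      rw [hKmDef] at hpos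
      simp only at hpos
      rw [hz] at hpos
      exact lt_irrefl 0 hpos
    obtain ⟨k, _, hk⟩ := this
    have hKpos : 0 < Ks k x y := by
      rcases lt_or_eq_of_le (hKs0 k x y) with h | h
      · exact h
      · rw [← h, mul_zero] at hk
        exact absurd hk (lt_irrefl 0)
    exact (hKsmem k).1.2.2 x y hKpos
  have hDraw : avgDraw v p Km = ∑ k, pE k * avgDraw v p (Ks k) := by
    rw [avgDraw]
    have hterm : ∀ x y, p x * Km x y * (v x - v y)
        = ∑ k, pE k * (p x * Ks k x y * (v x - v y)) := by
      intro x y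
      rw [hKmDef]
      simp only [Finset.mul_sum, Finset.sum_mul]
      exact Finset.sum_congr rfl fun k _ => by ring
    rw [Finset.sum_congr rfl fun x (_ : x ∈ Finset.univ) =>
      Finset.sum_congr rfl fun y (_ : y ∈ Finset.univ) => hterm x y]
    rw [Finset.sum_congr rfl fun x (_ : x ∈ Finset.univ) => Finset.sum_comm, Finset.sum_comm]
    apply Finset.sum_congr rfl
    intro k _
    rw [avgDraw, Finset.mul_sum]
    apply Finset.sum_congr rfl
    intro x _
    rw [Finset.mul_sum]
  have h0 : 0 ≤ avgDraw v p Km := by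
    rw [hDraw]
    exact Finset.sum_nonneg fun k _ => mul_nonneg (hpE.1 k) (hKsmem k).2.1
  have h1 : avgDraw v p Km ≤ Pbar := by
    rw [hDraw, hPbar]
    exact Finset.sum_le_sum fun k _ =>
      mul_le_mul_of_nonneg_left (hKsmem k).2.2 (hpE.1 k)
  have hle1 : ppfAvg v p Pbar ≤ chanMI p Km :=
    csInf_le hAvgBdd ⟨Km, hKmChan, h0, h1, rfl⟩
  have hle2 : chanMI p Km ≤ ∑ k, pE k * chanMI p (Ks k) :=
    chanMI_mix p hp pE hpE Ks hKs0 hKs1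
  have hle3 : ∑ k, pE k * chanMI p (Ks k)
      ≤ ∑ k, pE k * (ppfBoth v p (vE k) (vE k) + ε) :=
    Finset.sum_le_sum fun k _ => mul_le_mul_of_nonneg_left (hKslt k).le (hpE.1 k)
  have heq : ∑ k, pE k * (ppfBoth v p (vE k) (vE k) + ε)
      = (∑ k, pE k * ppfBoth v p (vE k) (vE k)) + ε := by
    simp only [mul_add, Finset.sum_add_distrib, ← Finset.sum_mul]
    rw [hpE.2, one_mul]
  linarith
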